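/- Let X be a finite-dimensional real vector space, q an asymmetric norm on X, and A ⊆ X a set which is compact in the topology τ_q. Then the convex hull conv(A) is also compact in τ_q. -/

import Mathlib

open Pointwise Set

/-- An asymmetric norm on a real vector space `X`. -/
structure IsAsymmetricNorm {X : Type*} [AddCommGroup X] [Module ℝ X] (q : X → ℝ) : Prop where
  nonneg : ∀ x, 0 ≤ q x
  smul_eq : ∀ a : ℝ, 0 ≤ a → ∀ x, q (a • x) = a * q x
  add_le : ∀ x y, q (x + y) ≤ q x + q y
  eq_zero : ∀ x, q x = 0 → q (-x) = 0 → x = 0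

/-- The topology `τ_q` generated by the open balls of `q`. -/
def asymTop {X : Type*} [AddCommGroup X] [Module ℝ X] (q : X → ℝ) : TopologicalSpace X :=
  TopologicalSpace.generateFrom {U | ∃ x : X, ∃ ε : ℝ, 0 < ε ∧ U = {y | q (y - x) < ε}}

/-- The symmetrization `q^s` of `q`. -/
def symNorm {X : Type*} [AddCommGroup X] (q : X → ℝ) (x : X) : ℝ := max (q x) (q (-x))

/-- The cone `θ_q = {x : q x = 0}`. -/
def theta {X : Type*} [AddCommGroup X] (q : X → ℝ) : Set X := {x | q x = 0}

/-- The closed ball `B_r^q[x] = {y : q (y - x) ≤ r}`. -/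
def closedBallA {X : Type*} [AddCommGroup X] (q : X → ℝ) (x : X) (r : ℝ) : Set X :=
  {y | q (y - x) ≤ r}

/-- A set `K` is strongly compact (w.r.t. the asymmetric norm `q`) if there is a set `S`,
compact in the topology of the norm `q^s`, with `S ⊆ K ⊆ S + θ_q`. -/
def StronglyCompact {X : Type*} [AddCommGroup X] [Module ℝ X] (q : X → ℝ) (K : Set X) : Prop :=
  ∃ S : Set X, @IsCompact X (asymTop (symNorm q)) S ∧ S ⊆ K ∧ K ⊆ S + theta q

/-- `q` is right bounded if `r • B_1^q[0] ⊆ B_1^{q^s}[0] + θ_q` for some `r > 0`. -/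
def RightBounded {X : Type*} [AddCommGroup X] [Module ℝ X] (q : X → ℝ) : Prop :=
  ∃ r : ℝ, 0 < r ∧ r • closedBallA q 0 1 ⊆ closedBallA (symNorm q) 0 1 + theta q

/-- `q` is 1-bounded if `B_1^q[0] ⊆ B_1^{q^s}[0] + θ_q`. -/
def OneBounded {X : Type*} [AddCommGroup X] [Module ℝ X] (q : X → ℝ) : Prop :=
  closedBallA q 0 1 ⊆ closedBallA (symNorm q) 0 1 + theta q

/-- Two asymmetric norms are equivalent if `κ·q ≤ p ≤ l·q` for some `κ, l > 0`. -/
def EquivNorms {X : Type*} [AddCommGroup X] (p q : X → ℝ) : Prop :=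
  ∃ κ l : ℝ, 0 < κ ∧ 0 < l ∧ ∀ x, κ * q x ≤ p x ∧ p x ≤ l * q x

/-- `X` is strongly locally compact (w.r.t. `τ_q`) if every point has a local base of
strongly compact sets. -/
def StronglyLocallyCompact {X : Type*} [AddCommGroup X] [Module ℝ X] (q : X → ℝ) : Prop :=
  ∀ x : X, ∀ U ∈ @nhds X (asymTop q) x,
    ∃ K : Set X, StronglyCompact q K ∧ K ∈ @nhds X (asymTop q) x ∧ K ⊆ U

section Aux

variable {X : Type*} [AddCommGroup X] [Module ℝ X] {q : X → ℝ}

lemma IsAsymmetricNorm.q_zero (hq : IsAsymmetricNorm q) : q 0 = 0 := by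
  have := hq.smul_eq 0 le_rfl 0
  simpa using this

lemma IsAsymmetricNorm.q_sum_le (hq : IsAsymmetricNorm q) {ι : Type*} (s : Finset ι)
    (f : ι → X) : q (∑ i ∈ s, f i) ≤ ∑ i ∈ s, q (f i) := by
  induction s using Finset.cons_induction with
  | empty => simp [hq.q_zero]
  | cons a s ha ih =>
    rw [Finset.sum_cons, Finset.sum_cons]
    exact (hq.add_le _ _).trans (by linarith)

lemma IsAsymmetricNorm.q_smul_le (hq : IsAsymmetricNorm q) (t : ℝ) (v : X) :
    q (t • v) ≤ |t| * symNorm q v := by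
  rcases le_or_gt 0 t with ht | ht
  · rw [hq.smul_eq t ht, abs_of_nonneg ht]
    exact mul_le_mul_of_nonneg_left (le_max_left _ _) ht
  · have : t • v = (-t) • (-v) := by simp
    rw [this, hq.smul_eq (-t) (by linarith), abs_of_neg ht]
    exact mul_le_mul_of_nonneg_left (le_max_right _ _) (by linarith)

lemma symNorm_nonneg (hq : IsAsymmetricNorm q) (v : X) : 0 ≤ symNorm q v :=
  (hq.nonneg v).trans (le_max_left _ _)

lemma asym_ball_mem_nhds (hq : IsAsymmetricNorm q) (x : X) {ε : ℝ} (hε : 0 < ε) :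
    {y | q (y - x) < ε} ∈ @nhds X (asymTop q) x := by
  letI : TopologicalSpace X := asymTop q
  have hopen : IsOpen {y | q (y - x) < ε} :=
    TopologicalSpace.isOpen_generateFrom_of_mem ⟨x, ε, hε, rfl⟩
  exact hopen.mem_nhds (by simpa [hq.q_zero] using hε)

lemma asym_tendsto (hq : IsAsymmetricNorm q) {α : Type*} {f : α → X} {l : Filter α} {x : X}
    (h : ∀ ε : ℝ, 0 < ε → {a | q (f a - x) < ε} ∈ l) :
    Filter.Tendsto f l (@nhds X (asymTop q) x) := by
  refine TopologicalSpace.tendsto_nhds_generateFrom_iff.mpr ?_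
  rintro s ⟨c, ε, hε, rfl⟩ hx
  have hδ : 0 < ε - q (x - c) := by simpa using hx
  filter_upwards [h _ hδ] with a ha
  have htri : q (f a - c) ≤ q (f a - x) + q (x - c) := by
    have := hq.add_le (f a - x) (x - c)
    simpa using this
  show q (f a - c) < ε
  have ha' : q (f a - x) < ε - q (x - c) := ha
  linarith

lemma sum_extend_eq {M : Type*} [AddCommMonoid M] {ι κ : Type*} [Fintype ι] [Fintype κ]
    (e : ι ↪ κ) (f : κ → M) (hf : ∀ j, (¬∃ i, e i = j) → f j = 0) :
    ∑ j, f j = ∑ i, f (e i) := by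
  classical
  have h1 : ∑ j, f j = ∑ j ∈ Finset.univ.image e, f j := by
    refine (Finset.sum_subset (Finset.subset_univ _) fun j _ hj => ?_).symm
    apply hf
    intro ⟨i, hi⟩
    exact hj (Finset.mem_image.2 ⟨i, Finset.mem_univ i, hi⟩)
  rw [h1, Finset.sum_image (fun i _ j _ h => e.injective h)]

end Aux

theorem statement6 {X : Type*} [AddCommGroup X] [Module ℝ X] [FiniteDimensional ℝ X]
    (q : X → ℝ) (hq : IsAsymmetricNorm q) (A : Set X)
    (hA : @IsCompact X (asymTop q) A) :
    @IsCompact X (asymTop q) (convexHull ℝ A) := by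
  classical
  letI τ : TopologicalSpace X := asymTop q
  rcases A.eq_empty_or_nonempty with rfl | ⟨a₀, ha₀⟩
  · simpa using (isCompact_empty : @IsCompact X τ ∅)
  set m : ℕ := Module.finrank ℝ X + 1 with hm
  set F : (Fin m → ℝ) × (Fin m → X) → X := fun p => ∑ i, p.1 i • p.2 i with hF
  set D : Set ((Fin m → ℝ) × (Fin m → X)) :=
    (stdSimplex ℝ (Fin m)) ×ˢ Set.pi Set.univ (fun _ => A) with hD
  have hDcomp : IsCompact D := (isCompact_stdSimplex (𝕜 := ℝ) (ι := Fin m)).prod (isCompact_univ_pi fun _ => hA)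
  -- continuity of F on D
  have hcont : ContinuousOn F D := by
    intro p₀ hp₀
    apply asym_tendsto hq
    intro ε hε
    set w₀ := p₀.1
    set z₀ := p₀.2
    set S : ℝ := ∑ i, symNorm q (z₀ i) with hS
    have hS0 : 0 ≤ S := Finset.sum_nonneg fun i _ => symNorm_nonneg hq _
    set δ₁ : ℝ := ε / (2 * m) with hδ₁def
    set δ₂ : ℝ := ε / (2 * (S + 1)) with hδ₂def
    have hmpos : (0 : ℝ) < m := by positivity
    have hδ₁ : 0 < δ₁ := by positivity
    have hδ₂ : 0 < δ₂ := by positivity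
    have hV₁ : (Set.pi Set.univ fun i => {t : ℝ | |t - w₀ i| < δ₂}) ∈ nhds w₀ := by
      refine set_pi_mem_nhds Set.finite_univ fun i _ => ?_
      have : {t : ℝ | |t - w₀ i| < δ₂} = Metric.ball (w₀ i) δ₂ := by
        ext t; simp [Metric.mem_ball, Real.dist_eq]
      rw [this]
      exact Metric.ball_mem_nhds _ hδ₂
    have hV₂ : (Set.pi Set.univ fun i => {v : X | q (v - z₀ i) < δ₁}) ∈ nhds z₀ :=
      set_pi_mem_nhds Set.finite_univ fun i _ => asym_ball_mem_nhds hq _ hδ₁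
    have hV : ((Set.pi Set.univ fun i => {t : ℝ | |t - w₀ i| < δ₂}) ×ˢ
        (Set.pi Set.univ fun i => {v : X | q (v - z₀ i) < δ₁})) ∈ nhds p₀ :=
      prod_mem_nhds hV₁ hV₂
    filter_upwards [mem_nhdsWithin_of_mem_nhds hV, self_mem_nhdsWithin] with p hpV hpD
    have hw0 : ∀ i, 0 ≤ p.1 i := hpD.1.1
    have hw1 : ∀ i, p.1 i ≤ 1 := by
      intro i
      have := Finset.single_le_sum (fun j _ => hpD.1.1 j) (Finset.mem_univ i)
      rw [hpD.1.2] at this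
      exact this
    have hterm : ∀ i : Fin m, q (p.1 i • p.2 i - w₀ i • z₀ i) ≤ δ₁ + δ₂ * symNorm q (z₀ i) := by
      intro i
      have hdecomp : p.1 i • p.2 i - w₀ i • z₀ i
          = p.1 i • (p.2 i - z₀ i) + (p.1 i - w₀ i) • z₀ i := by
        rw [smul_sub, sub_smul]; abel
      rw [hdecomp]
      refine (hq.add_le _ _).trans (add_le_add ?_ ?_)
      · rw [hq.smul_eq _ (hw0 i)]
        calc p.1 i * q (p.2 i - z₀ i) ≤ 1 * δ₁ :=
              mul_le_mul (hw1 i) (hpV.2 i (Set.mem_univ i)).le (hq.nonneg _) one_pos.le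
          _ = δ₁ := one_mul _
      · refine (hq.q_smul_le _ _).trans ?_
        exact mul_le_mul_of_nonneg_right (hpV.1 i (Set.mem_univ i)).le (symNorm_nonneg hq _)
    have hsum : q (F p - F p₀) ≤ (m : ℝ) * δ₁ + δ₂ * S := by
      have h1 : F p - F p₀ = ∑ i, (p.1 i • p.2 i - w₀ i • z₀ i) := by
        rw [hF]; simp [Finset.sum_sub_distrib]; rfl
      calc q (F p - F p₀) ≤ ∑ i, q (p.1 i • p.2 i - w₀ i • z₀ i) := by
            rw [h1]; exact hq.q_sum_le _ _
        _ ≤ ∑ i : Fin m, (δ₁ + δ₂ * symNorm q (z₀ i)) := Finset.sum_le_sum fun i _ => hterm i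
        _ = (m : ℝ) * δ₁ + δ₂ * S := by
            rw [Finset.sum_add_distrib, Finset.sum_const, ← Finset.mul_sum]
            simp [nsmul_eq_mul]
            exact Or.inl rfl
    have e1 : (m : ℝ) * δ₁ = ε / 2 := by
      rw [hδ₁def]; field_simp
    have e2 : δ₂ * (S + 1) = ε / 2 := by
      rw [hδ₂def]; field_simp
    have e3 : δ₂ * S < δ₂ * (S + 1) := mul_lt_mul_of_pos_left (lt_add_one S) hδ₂
    show q (F p - F p₀) < ε
    calc q (F p - F p₀) ≤ (m : ℝ) * δ₁ + δ₂ * S := hsum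
      _ < ε := by rw [e1]; linarith
  -- the image equals the convex hull
  have himg : F '' D = convexHull ℝ A := by
    apply Set.Subset.antisymm
    · rintro _ ⟨⟨w, z⟩, ⟨hw, hz⟩, rfl⟩
      have hsum1 : ∑ i, w i = 1 := hw.2
      have := Finset.univ.centerMass_mem_convexHull (w := w) (z := z)
        (fun i _ => hw.1 i) (by rw [hsum1]; exact one_pos) (fun i _ => hz i (Set.mem_univ i))
      rwa [Finset.centerMass_eq_of_sum_1 _ _ hsum1] at this
    · intro x hx
      obtain ⟨ι, hft, z, w, hrange, hai, hpos, hsum1, hsumx⟩ :=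
        eq_pos_convex_span_of_mem_convexHull hx
      letI := hft
      have hcard : Fintype.card ι ≤ m := by
        have h1 := hai.card_le_finrank_succ
        have h2 : Module.finrank ℝ (vectorSpan ℝ (Set.range z)) ≤ Module.finrank ℝ X :=
          Submodule.finrank_le _
        omega
      obtain ⟨e⟩ : Nonempty (ι ↪ Fin m) :=
        Function.Embedding.nonempty_of_card_le (by simpa using hcard)
      set w' : Fin m → ℝ := Function.extend e w (fun _ => 0) with hw'
      set z' : Fin m → X := Function.extend e z (fun _ => a₀) with hz'
      have hwe : ∀ i, w' (e i) = w i := fun i => e.injective.extend_apply _ _ i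
      have hze : ∀ i, z' (e i) = z i := fun i => e.injective.extend_apply _ _ i
      have hwo : ∀ j, (¬∃ i, e i = j) → w' j = 0 := fun j hj =>
        Function.extend_apply' _ _ _ hj
      have hzo : ∀ j, (¬∃ i, e i = j) → z' j = a₀ := fun j hj =>
        Function.extend_apply' _ _ _ hj
      have hw'sum : ∑ j, w' j = 1 := by
        rw [sum_extend_eq e w' hwo]
        simp only [hwe]
        exact hsum1
      have hw'mem : w' ∈ stdSimplex ℝ (Fin m) := by
        refine ⟨fun j => ?_, hw'sum⟩
        by_cases hj : ∃ i, e i = j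
        · obtain ⟨i, rfl⟩ := hj
          rw [hwe]
          exact (hpos i).le
        · rw [hwo j hj]
      have hz'mem : ∀ j, z' j ∈ A := by
        intro j
        by_cases hj : ∃ i, e i = j
        · obtain ⟨i, rfl⟩ := hj
          rw [hze]
          exact hrange ⟨i, rfl⟩
        · rw [hzo j hj]
          exact ha₀
      refine ⟨(w', z'), ⟨hw'mem, fun j _ => hz'mem j⟩, ?_⟩
      show ∑ j, w' j • z' j = x
      rw [sum_extend_eq e (fun j => w' j • z' j) (fun j hj => by show w' j • z' j = 0; rw [hwo j hj, zero_smul])]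
      simp only [hwe, hze]
      exact hsumx
  rw [← himg]
  exact hDcomp.image_of_continuousOn hcont
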